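/- The subgroup of SL₂(ℤ) generated by U² = [[1,2],[0,1]] and L² = [[1,0],[2,1]] together with -I consists exactly of the matrices in SL₂(ℤ) congruent to ±I modulo 2. -/

import Mathlib

lemma key_red (x y : ℤ) (hy : y ≠ 0) (hpar : (x + y) % 2 = 1) :
    ∃ k : ℤ, (x + 2 * k * y).natAbs < y.natAbs := by
  rcases lt_or_gt_of_ne hy with hneg | hpos
  · set y' := -y with hy'
    have hy'pos : 0 < y' := by omega
    set q := x / (2 * y') with hq
    set r := x % (2 * y') with hr
    have hdm : 2 * y' * q + r = x := Int.mul_ediv_add_emod x (2 * y')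
    have hr0 : 0 ≤ r := Int.emod_nonneg x (by omega)
    have hr1 : r < 2 * y' := Int.emod_lt_of_pos x (by omega)
    have hrpar : r % 2 = x % 2 := Int.emod_emod_of_dvd x ⟨y', rfl⟩
    rcases lt_trichotomy r y' with h | h | h
    · have e1 : x + 2 * q * y = r := by linear_combination -hdm + 2 * q * hy'
      exact ⟨q, by omega⟩
    · omega
    · have e1 : x + 2 * (q + 1) * y = r - 2 * y' := by
        linear_combination -hdm + 2 * (q + 1) * hy'
      exact ⟨q + 1, by omega⟩
  · set q := x / (2 * y) with hq
    set r := x % (2 * y) with hr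
    have hdm : 2 * y * q + r = x := Int.mul_ediv_add_emod x (2 * y)
    have hr0 : 0 ≤ r := Int.emod_nonneg x (by omega)
    have hr1 : r < 2 * y := Int.emod_lt_of_pos x (by omega)
    have hrpar : r % 2 = x % 2 := Int.emod_emod_of_dvd x ⟨y, rfl⟩
    rcases lt_trichotomy r y with h | h | h
    · have e1 : x + 2 * (-q) * y = r := by linear_combination -hdm
      exact ⟨-q, by omega⟩
    · omega
    · have e1 : x + 2 * (-q - 1) * y = r - 2 * y := by linear_combination -hdm
      exact ⟨-q - 1, by omega⟩


def U2 : Matrix.SpecialLinearGroup (Fin 2) ℤ :=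
  ⟨!![1, 2; 0, 1], by simp [Matrix.det_fin_two_of]⟩

def L2 : Matrix.SpecialLinearGroup (Fin 2) ℤ :=
  ⟨!![1, 0; 2, 1], by simp [Matrix.det_fin_two_of]⟩

abbrev SL2Z := Matrix.SpecialLinearGroup (Fin 2) ℤ

def Gsub : Subgroup SL2Z := Subgroup.closure {U2, L2, (-1 : SL2Z)}

def uu (k : ℤ) : SL2Z := ⟨!![1, 2 * k; 0, 1], by simp [Matrix.det_fin_two_of]⟩
def ll (k : ℤ) : SL2Z := ⟨!![1, 0; 2 * k, 1], by simp [Matrix.det_fin_two_of]⟩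

lemma U2_mem : U2 ∈ Gsub := Subgroup.subset_closure (by simp)
lemma L2_mem : L2 ∈ Gsub := Subgroup.subset_closure (by simp)
lemma neg_one_mem : (-1 : SL2Z) ∈ Gsub := Subgroup.subset_closure (by simp)

lemma uu_succ (k : ℤ) : uu (k + 1) = U2 * uu k := by
  apply Subtype.ext
  show _ = (U2 : Matrix (Fin 2) (Fin 2) ℤ) * (uu k : Matrix (Fin 2) (Fin 2) ℤ)
  simp [uu, U2, Matrix.mul_fin_two]
  ring_nf

lemma uu_mem (k : ℤ) : uu k ∈ Gsub := by
  induction k using Int.induction_on with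
  | zero =>
    have : uu 0 = 1 := by
      apply Subtype.ext; simp [uu]; exact Matrix.one_fin_two.symm
    rw [this]; exact one_mem _
  | succ n ih => rw [show ((n : ℤ) + 1) = (n : ℤ) + 1 from rfl, uu_succ]; exact mul_mem U2_mem ih
  | pred n ih =>
    have h := uu_succ (-(n : ℤ) - 1)
    rw [show (-(n : ℤ) - 1 + 1) = -(n : ℤ) from by ring] at h
    have h2 : uu (-(n : ℤ) - 1) = U2⁻¹ * uu (-(n : ℤ)) := by
      rw [h, inv_mul_cancel_left]
    rw [h2]
    exact mul_mem (inv_mem U2_mem) ih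

lemma ll_succ (k : ℤ) : ll (k + 1) = L2 * ll k := by
  apply Subtype.ext
  show _ = (L2 : Matrix (Fin 2) (Fin 2) ℤ) * (ll k : Matrix (Fin 2) (Fin 2) ℤ)
  simp [ll, L2, Matrix.mul_fin_two]
  ring_nf

lemma ll_mem (k : ℤ) : ll k ∈ Gsub := by
  induction k using Int.induction_on with
  | zero =>
    have : ll 0 = 1 := by
      apply Subtype.ext; simp [ll]; exact Matrix.one_fin_two.symm
    rw [this]; exact one_mem _
  | succ n ih => rw [show ((n : ℤ) + 1) = (n : ℤ) + 1 from rfl, ll_succ]; exact mul_mem L2_mem ih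
  | pred n ih =>
    have h := ll_succ (-(n : ℤ) - 1)
    rw [show (-(n : ℤ) - 1 + 1) = -(n : ℤ) from by ring] at h
    have h2 : ll (-(n : ℤ) - 1) = L2⁻¹ * ll (-(n : ℤ)) := by
      rw [h, inv_mul_cancel_left]
    rw [h2]
    exact mul_mem (inv_mem L2_mem) ih

-- entry computation lemmas
lemma uu_mul (k : ℤ) (M : SL2Z) :
    ((uu k * M : SL2Z) : Matrix (Fin 2) (Fin 2) ℤ) =
      !![M.1 0 0 + 2 * k * M.1 1 0, M.1 0 1 + 2 * k * M.1 1 1; M.1 1 0, M.1 1 1] := by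
  show (uu k : Matrix (Fin 2) (Fin 2) ℤ) * (M : Matrix (Fin 2) (Fin 2) ℤ) = _
  rw [Matrix.eta_fin_two (M : Matrix (Fin 2) (Fin 2) ℤ)]
  simp [uu, Matrix.mul_fin_two]

lemma ll_mul (k : ℤ) (M : SL2Z) :
    ((ll k * M : SL2Z) : Matrix (Fin 2) (Fin 2) ℤ) =
      !![M.1 0 0, M.1 0 1; M.1 1 0 + 2 * k * M.1 0 0, M.1 1 1 + 2 * k * M.1 0 1] := by
  show (ll k : Matrix (Fin 2) (Fin 2) ℤ) * (M : Matrix (Fin 2) (Fin 2) ℤ) = _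
  rw [Matrix.eta_fin_two (M : Matrix (Fin 2) (Fin 2) ℤ)]
  simp [ll, Matrix.mul_fin_two]
  ring_nf
  exact ⟨trivial, trivial⟩


lemma int_cast_zmod2_eq_one {x : ℤ} (h : ((x : ZMod 2) = 1)) : x % 2 = 1 := by
  have h2 : ((x - 1 : ℤ) : ZMod 2) = 0 := by push_cast; rw [h]; ring
  have := (ZMod.intCast_zmod_eq_zero_iff_dvd _ 2).mp h2
  omega

lemma int_cast_zmod2_eq_zero {x : ℤ} (h : ((x : ZMod 2) = 0)) : x % 2 = 0 := by
  have := (ZMod.intCast_zmod_eq_zero_iff_dvd x 2).mp h; omega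

lemma main_ind : ∀ n : ℕ, ∀ A : SL2Z, ((A : Matrix (Fin 2) (Fin 2) ℤ) 1 0).natAbs = n →
    (A : Matrix (Fin 2) (Fin 2) ℤ) 0 0 % 2 = 1 →
    (A : Matrix (Fin 2) (Fin 2) ℤ) 0 1 % 2 = 0 →
    (A : Matrix (Fin 2) (Fin 2) ℤ) 1 0 % 2 = 0 → A ∈ Gsub := by
  intro n
  induction n using Nat.strong_induction_on with
  | _ n ih =>
    intro A hn ha hb hc
    have key : (A : Matrix (Fin 2) (Fin 2) ℤ) =
        !![A.1 0 0, A.1 0 1; A.1 1 0, A.1 1 1] := Matrix.eta_fin_two _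
    have hdet : A.1 0 0 * A.1 1 1 - A.1 0 1 * A.1 1 0 = 1 := by
      have h2 := A.2; rw [Matrix.det_fin_two] at h2; exact h2
    by_cases hc0 : A.1 1 0 = 0
    · have had : A.1 0 0 * A.1 1 1 = 1 := by rw [hc0] at hdet; linarith
      obtain ⟨m, hm⟩ : ∃ m, A.1 0 1 = 2 * m := ⟨A.1 0 1 / 2, by omega⟩
      rcases Int.mul_eq_one_iff_eq_one_or_neg_one.mp had with ⟨ha1, hd1⟩ | ⟨ha1, hd1⟩
      · have hA : A = uu m := by
          apply Subtype.ext
          rw [key, hc0, ha1, hd1, hm]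
          rfl
        rw [hA]; exact uu_mem m
      · have hA : A = -1 * uu (-m) := by
          apply Subtype.ext
          show _ = ((-1 : SL2Z) : Matrix (Fin 2) (Fin 2) ℤ) * ((uu (-m) : SL2Z) : Matrix (Fin 2) (Fin 2) ℤ)
          rw [key, hc0, ha1, hd1, hm]
          simp [uu, Matrix.mul_fin_two]
        rw [hA]; exact mul_mem neg_one_mem (uu_mem (-m))
    · have hapar : (A.1 0 0 + A.1 1 0) % 2 = 1 := by omega
      obtain ⟨k, hk⟩ := key_red (A.1 0 0) (A.1 1 0) hc0 hapar
      set B := uu k * A with hBdef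
      have hBv := uu_mul k A
      have hB00 : B.1 0 0 = A.1 0 0 + 2 * k * A.1 1 0 := by rw [hBv]; rfl
      have hB01 : B.1 0 1 = A.1 0 1 + 2 * k * A.1 1 1 := by rw [hBv]; rfl
      have hB10 : B.1 1 0 = A.1 1 0 := by rw [hBv]; rfl
      have hB00odd : B.1 0 0 % 2 = 1 := by
        have e : 2 * k * A.1 1 0 = 2 * (k * A.1 1 0) := by ring
        rw [hB00, e]; omega
      have hB00ne : B.1 0 0 ≠ 0 := by omega
      have hBpar : (B.1 1 0 + B.1 0 0) % 2 = 1 := by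
        rw [hB10]; omega
      obtain ⟨k', hk'⟩ := key_red (B.1 1 0) (B.1 0 0) hB00ne hBpar
      set C := ll k' * B with hCdef
      have hCv := ll_mul k' B
      have hC00 : C.1 0 0 = B.1 0 0 := by rw [hCv]; rfl
      have hC01 : C.1 0 1 = B.1 0 1 := by rw [hCv]; rfl
      have hC10 : C.1 1 0 = B.1 1 0 + 2 * k' * B.1 0 0 := by rw [hCv]; rfl
      have hlt : (C.1 1 0).natAbs < n := by
        rw [hC10]
        calc (B.1 1 0 + 2 * k' * B.1 0 0).natAbs < (B.1 0 0).natAbs := hk'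
          _ = (A.1 0 0 + 2 * k * A.1 1 0).natAbs := by rw [hB00]
          _ < (A.1 1 0).natAbs := hk
          _ = n := hn
      have hCmem : C ∈ Gsub := by
        apply ih _ hlt C rfl
        · rw [hC00]; exact hB00odd
        · rw [hC01, hB01]
          have e : 2 * k * A.1 1 1 = 2 * (k * A.1 1 1) := by ring
          rw [e]; omega
        · rw [hC10, hB10]
          have e : 2 * k' * B.1 0 0 = 2 * (k' * B.1 0 0) := by ring
          rw [e]; omega
      have hBmem : B ∈ Gsub := by
        have h2 := mul_mem (inv_mem (ll_mem k')) hCmem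
        rwa [hCdef, inv_mul_cancel_left] at h2
      have h3 := mul_mem (inv_mem (uu_mem k)) hBmem
      rwa [hBdef, inv_mul_cancel_left] at h3

theorem stmt_12 (A : Matrix.SpecialLinearGroup (Fin 2) ℤ) :
    A ∈ Subgroup.closure {U2, L2, (-1 : Matrix.SpecialLinearGroup (Fin 2) ℤ)} ↔
      ((A : Matrix (Fin 2) (Fin 2) ℤ).map (Int.cast : ℤ → ZMod 2) = (1 : Matrix (Fin 2) (Fin 2) (ZMod 2)) ∨
       (A : Matrix (Fin 2) (Fin 2) ℤ).map (Int.cast : ℤ → ZMod 2) = (-1 : Matrix (Fin 2) (Fin 2) (ZMod 2))) := by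
  have hneg1 : (-1 : Matrix (Fin 2) (Fin 2) (ZMod 2)) = 1 := by decide
  set φ := Matrix.SpecialLinearGroup.map (n := Fin 2) (Int.castRingHom (ZMod 2)) with hphi
  have hphiA : ∀ M : SL2Z, ((φ M : Matrix.SpecialLinearGroup (Fin 2) (ZMod 2)) : Matrix (Fin 2) (Fin 2) (ZMod 2))
      = (M : Matrix (Fin 2) (Fin 2) ℤ).map (Int.cast : ℤ → ZMod 2) := by
    intro M
    rw [hphi, Matrix.SpecialLinearGroup.map_apply_coe]
    simp [RingHom.mapMatrix_apply]
  constructor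
  · intro hA
    left
    have hker : ({U2, L2, (-1 : SL2Z)} : Set SL2Z) ⊆ φ.ker := by
      intro x hx
      simp only [Set.mem_insert_iff, Set.mem_singleton_iff] at hx
      rcases hx with rfl | rfl | rfl <;>
      · simp only [SetLike.mem_coe, MonoidHom.mem_ker]
        apply Subtype.ext
        rw [hphiA]
        simp only [Matrix.SpecialLinearGroup.coe_one, Matrix.SpecialLinearGroup.coe_neg]
        ext i j
        fin_cases i <;> fin_cases j <;>
          simp [U2, L2, Matrix.map_apply, Matrix.one_apply] <;> decide
    have h1 : A ∈ φ.ker := (Subgroup.closure_le _).mpr hker hA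
    rw [MonoidHom.mem_ker] at h1
    have h2 := hphiA A
    rw [h1] at h2
    exact h2.symm
  · intro h
    have hmap : (A : Matrix (Fin 2) (Fin 2) ℤ).map (Int.cast : ℤ → ZMod 2) = 1 := by
      rcases h with h | h
      · exact h
      · rw [h, hneg1]
    have h00 : ((A.1 0 0 : ℤ) : ZMod 2) = 1 := by
      have := congrFun (congrFun hmap 0) 0
      simpa [Matrix.map_apply, Matrix.one_apply] using this
    have h01 : ((A.1 0 1 : ℤ) : ZMod 2) = 0 := by
      have := congrFun (congrFun hmap 0) 1
      simpa [Matrix.map_apply, Matrix.one_apply] using this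
    have h10 : ((A.1 1 0 : ℤ) : ZMod 2) = 0 := by
      have := congrFun (congrFun hmap 1) 0
      simpa [Matrix.map_apply, Matrix.one_apply] using this
    exact main_ind _ A rfl (int_cast_zmod2_eq_one h00)
      (int_cast_zmod2_eq_zero h01) (int_cast_zmod2_eq_zero h10)
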